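/- Let (R, Q, α) be a log ring and let I, J be ideals of the monoid Q. Assume that R is α-flat. Then the ideal of R generated by α(I) intersected with the ideal of R generated by α(J) equals the ideal of R generated by α(I ∩ J); that is, α(I)R ∩ α(J)R = α(I ∩ J)R. -/

import Mathlib

open CategoryTheory

universe u

/-- The ring homomorphism `ℤ[Q] → R` induced by a monoid homomorphism `α` from `Q` to the
multiplicative monoid of `R`; it makes `R` a `ℤ[Q]`-algebra. -/
noncomputable def logRingHom {R Q : Type*} [CommRing R] [AddCommMonoid Q]
    (α : Multiplicative Q →* R) : AddMonoidAlgebra ℤ Q →+* R :=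
  ((AddMonoidAlgebra.lift ℤ R Q) α).toRingHom

/-- For a subset `I ⊆ Q`, the ideal `ℤ[I]` of the monoid algebra `ℤ[Q]` spanned by the
basis elements `e^a` for `a ∈ I`. -/
noncomputable def monoidIdealSpan {Q : Type*} [AddCommMonoid Q] (I : Set Q) :
    Ideal (AddMonoidAlgebra ℤ Q) :=
  Ideal.span ((fun a : Q => (AddMonoidAlgebra.single a 1 : AddMonoidAlgebra ℤ Q)) '' I)

/-- `R` is `α`-flat: `Tor₁^{ℤ[Q]}(ℤ[Q]/ℤ[I], R) = 0` for every ideal `I` of the monoid `Q`. -/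
noncomputable def IsAlphaFlat {R Q : Type u} [CommRing R] [AddCommMonoid Q]
    (α : Multiplicative Q →* R) : Prop :=
  letI : Module (AddMonoidAlgebra ℤ Q) R := (logRingHom α).toModule
  ∀ I : Set Q, (∀ a : Q, ∀ x ∈ I, a + x ∈ I) →
    Limits.IsZero
      (((Tor (ModuleCat (AddMonoidAlgebra ℤ Q)) 1).obj
          (ModuleCat.of (AddMonoidAlgebra ℤ Q)
            (AddMonoidAlgebra ℤ Q ⧸ monoidIdealSpan I))).obj
        (ModuleCat.of (AddMonoidAlgebra ℤ Q) R))


open TensorProduct MonoidalCategory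

section MonoidIdeal

variable {Q : Type*} [AddCommMonoid Q]

theorem mem_monoidIdealSpan_iff {K : Set Q} (hK : ∀ a : Q, ∀ x ∈ K, a + x ∈ K)
    (f : AddMonoidAlgebra ℤ Q) :
    f ∈ monoidIdealSpan K ↔ ∀ a ∈ f.coeff.support, a ∈ K := by
  classical
  constructor
  · intro hf
    let T : Ideal (AddMonoidAlgebra ℤ Q) :=
      { carrier := {f : AddMonoidAlgebra ℤ Q | ∀ a ∈ f.coeff.support, a ∈ K}
        add_mem' := by
          intro f g hf hg a ha
          rcases Finset.mem_union.mp (Finsupp.support_add ha) with h | h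
          · exact hf a h
          · exact hg a h
        zero_mem' := by intro a ha; simp at ha
        smul_mem' := by
          intro g f hf a ha
          rw [smul_eq_mul] at ha
          rcases Finset.mem_add.mp (AddMonoidAlgebra.support_coeff_mul_subset g f ha) with ⟨b, hb, c, hc, rfl⟩
          exact hK b c (hf c hc) }
    have hle : monoidIdealSpan K ≤ T := by
      rw [monoidIdealSpan, Ideal.span_le]
      rintro _ ⟨a, haK, rfl⟩
      intro b hb
      have := Finsupp.support_single_subset hb
      simp only [Finset.mem_singleton] at this
      subst this; exact haK
    exact hle hf
  · intro hf
    have : f = ∑ a ∈ f.coeff.support, AddMonoidAlgebra.single a (f.coeff a) := by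
      exact (congrArg AddMonoidAlgebra.ofCoeff (Finsupp.sum_single f.coeff)).symm.trans
        (AddMonoidAlgebra.ofCoeff_sum _ _)
    rw [this]
    refine Submodule.sum_mem _ ?_
    intro a ha
    have : (AddMonoidAlgebra.single a (f.coeff a) : AddMonoidAlgebra ℤ Q)
        = AddMonoidAlgebra.single 0 (f.coeff a) * AddMonoidAlgebra.single a 1 := by
      rw [AddMonoidAlgebra.single_mul_single, zero_add, mul_one]
    rw [this]
    exact Ideal.mul_mem_left _ _ (Ideal.subset_span ⟨a, hf a ha, rfl⟩)

theorem monoidIdealSpan_inter {I J : Set Q} (hI : ∀ a : Q, ∀ x ∈ I, a + x ∈ I)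
    (hJ : ∀ a : Q, ∀ x ∈ J, a + x ∈ J) :
    monoidIdealSpan (I ∩ J) = monoidIdealSpan I ⊓ monoidIdealSpan J := by
  have hIJ : ∀ a : Q, ∀ x ∈ I ∩ J, a + x ∈ I ∩ J := fun a x hx =>
    ⟨hI a x hx.1, hJ a x hx.2⟩
  ext f
  rw [Submodule.mem_inf, mem_monoidIdealSpan_iff hIJ, mem_monoidIdealSpan_iff hI,
    mem_monoidIdealSpan_iff hJ]
  constructor
  · exact fun h => ⟨fun a ha => (h a ha).1, fun a ha => (h a ha).2⟩
  · exact fun h a ha => ⟨h.1 a ha, h.2 a ha⟩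

theorem monoidIdealSpan_union {I J : Set Q} (hI : ∀ a : Q, ∀ x ∈ I, a + x ∈ I)
    (hJ : ∀ a : Q, ∀ x ∈ J, a + x ∈ J) :
    monoidIdealSpan (I ∪ J) = monoidIdealSpan I ⊔ monoidIdealSpan J := by
  classical
  have hIJ : ∀ a : Q, ∀ x ∈ I ∪ J, a + x ∈ I ∪ J := fun a x hx => by
    rcases hx with hx | hx
    · exact Or.inl (hI a x hx)
    · exact Or.inr (hJ a x hx)
  apply le_antisymm
  · intro f hf
    rw [mem_monoidIdealSpan_iff hIJ] at hf
    have hsplit : f = AddMonoidAlgebra.ofCoeff (f.coeff.filter (· ∈ I)) +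
        AddMonoidAlgebra.ofCoeff (f.coeff.filter (fun a => ¬ (a ∈ I))) :=
      congrArg AddMonoidAlgebra.ofCoeff (Finsupp.filter_pos_add_filter_neg f.coeff _).symm
    rw [hsplit]
    refine Submodule.add_mem _ (Submodule.mem_sup_left ?_) (Submodule.mem_sup_right ?_)
    · rw [mem_monoidIdealSpan_iff hI]
      intro a ha
      rw [AddMonoidAlgebra.coeff_ofCoeff, Finsupp.support_filter, Finset.mem_filter] at ha
      exact ha.2
    · rw [mem_monoidIdealSpan_iff hJ]
      intro a ha
      rw [AddMonoidAlgebra.coeff_ofCoeff, Finsupp.support_filter, Finset.mem_filter] at ha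
      rcases hf a ha.1 with h | h
      · exact absurd h ha.2
      · exact h
  · exact sup_le (Ideal.span_mono (Set.image_mono Set.subset_union_left))
      (Ideal.span_mono (Set.image_mono Set.subset_union_right))

end MonoidIdeal

section ModuleLemmas

variable {A : Type*} [CommRing A]

theorem finsupp_mem_smul_top_iff {ι : Type*} (a : Ideal A) (x : ι →₀ A) :
    x ∈ a • (⊤ : Submodule A (ι →₀ A)) ↔ ∀ i, x i ∈ a := by
  constructor
  · intro hx
    refine Submodule.smul_induction_on hx ?_ ?_
    · intro r hr n _ i
      rw [Finsupp.smul_apply, smul_eq_mul]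
      exact Ideal.mul_mem_right _ _ hr
    · intro y z hy hz i
      rw [Finsupp.add_apply]
      exact Ideal.add_mem _ (hy i) (hz i)
  · intro h
    have : x = ∑ i ∈ x.support, Finsupp.single i (x i) := (Finsupp.sum_single x).symm
    rw [this]
    refine Submodule.sum_mem _ ?_
    intro i _
    have : (Finsupp.single i (x i) : ι →₀ A) = (x i) • Finsupp.single i (1 : A) := by
      rw [Finsupp.smul_single', mul_one]
    rw [this]
    exact Submodule.smul_mem_smul (h i) trivial

theorem proj_mem_smul_top_iff {M : Type*} [AddCommGroup M] [Module A M]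
    [h : Module.Projective A M] (a : Ideal A) (x : M)
    (s : M →ₗ[A] (M →₀ A)) (hs : Function.LeftInverse (Finsupp.linearCombination A id) s) :
    x ∈ a • (⊤ : Submodule A M) ↔ s x ∈ a • (⊤ : Submodule A (M →₀ A)) := by
  constructor
  · intro hx
    have : s x ∈ Submodule.map s (a • ⊤) := Submodule.mem_map_of_mem hx
    rw [Submodule.map_smul''] at this
    exact Submodule.smul_mono le_rfl le_top this
  · intro hx
    have : Finsupp.linearCombination A (id : M → M) (s x) ∈
        Submodule.map (Finsupp.linearCombination A (id : M → M)) (a • ⊤) :=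
      Submodule.mem_map_of_mem hx
    rw [Submodule.map_smul''] at this
    rw [hs x] at this
    exact Submodule.smul_mono le_rfl le_top this

theorem projective_smul_top_inf {M : Type*} [AddCommGroup M] [Module A M]
    [h : Module.Projective A M] (a b : Ideal A) :
    (a • ⊤ : Submodule A M) ⊓ (b • ⊤) = (a ⊓ b) • ⊤ := by
  obtain ⟨s, hs⟩ := h.out
  apply le_antisymm
  · intro x hx
    rw [Submodule.mem_inf, proj_mem_smul_top_iff a x s hs, proj_mem_smul_top_iff b x s hs,
      finsupp_mem_smul_top_iff, finsupp_mem_smul_top_iff] at hx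
    rw [proj_mem_smul_top_iff (a ⊓ b) x s hs, finsupp_mem_smul_top_iff]
    exact fun i => ⟨hx.1 i, hx.2 i⟩
  · exact le_inf (Submodule.smul_mono_left inf_le_left) (Submodule.smul_mono_left inf_le_right)

open TensorProduct in
theorem one_tmul_surj (a : Ideal A) {M : Type*} [AddCommGroup M] [Module A M]
    (t : (A ⧸ a) ⊗[A] M) : ∃ w : M, (1 : A ⧸ a) ⊗ₜ[A] w = t := by
  induction t with
  | zero => exact ⟨0, TensorProduct.tmul_zero _ _⟩
  | tmul x m =>
    obtain ⟨r, rfl⟩ := Ideal.Quotient.mk_surjective x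
    refine ⟨r • m, ?_⟩
    rw [← TensorProduct.smul_tmul]
    congr 1
    rw [show (Ideal.Quotient.mk a r) = r • (1 : A ⧸ a) by
      have h1 : (1 : A ⧸ a) = Submodule.Quotient.mk (1 : A) := rfl
      rw [h1, ← Submodule.Quotient.mk_smul, smul_eq_mul, mul_one]; rfl]
  | add x y hx hy =>
    obtain ⟨w, hw⟩ := hx
    obtain ⟨v, hv⟩ := hy
    exact ⟨w + v, by rw [TensorProduct.tmul_add, hw, hv]⟩

open TensorProduct in
theorem one_tmul_eq_zero_iff (a : Ideal A) {M : Type*} [AddCommGroup M] [Module A M]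
    (m : M) :
    ((1 : A ⧸ a) ⊗ₜ[A] m : (A ⧸ a) ⊗[A] M) = 0 ↔ m ∈ a • (⊤ : Submodule A M) := by
  rw [← Submodule.Quotient.mk_eq_zero]
  constructor
  · intro hm
    have := congrArg (quotTensorEquivQuotSMul M a) hm
    rwa [map_zero, show (1 : A ⧸ a) = Ideal.Quotient.mk a 1 from rfl,
      quotTensorEquivQuotSMul_mk_tmul, one_smul] at this
  · intro hm
    apply (quotTensorEquivQuotSMul M a).injective
    rw [map_zero, show (1 : A ⧸ a) = Ideal.Quotient.mk a 1 from rfl,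
      quotTensorEquivQuotSMul_mk_tmul, one_smul]
    exact hm

open TensorProduct in
theorem core_exact_lemma {a : Ideal A}
    {M₂ M₁ M₀ : Type*} [AddCommGroup M₂] [AddCommGroup M₁] [AddCommGroup M₀]
    [Module A M₂] [Module A M₁] [Module A M₀]
    (d₂ : M₂ →ₗ[A] M₁) (d₁ : M₁ →ₗ[A] M₀)
    (hcomp : ∀ x, d₁ (d₂ x) = 0)
    (hex : ∀ t : (A ⧸ a) ⊗[A] M₁, (LinearMap.lTensor (A ⧸ a) d₁) t = 0 →
      ∃ t' : (A ⧸ a) ⊗[A] M₂, (LinearMap.lTensor (A ⧸ a) d₂) t' = t) :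
    ∀ y : M₀, y ∈ LinearMap.range d₁ → y ∈ a • (⊤ : Submodule A M₀) →
      y ∈ a • LinearMap.range d₁ := by
  intro y hy hya
  obtain ⟨u, rfl⟩ := hy
  have h2 : LinearMap.lTensor (A ⧸ a) d₁ ((1 : A ⧸ a) ⊗ₜ[A] u) = 0 := by
    rw [LinearMap.lTensor_tmul]
    exact (one_tmul_eq_zero_iff a (d₁ u)).mpr hya
  obtain ⟨t, ht⟩ := hex _ h2
  obtain ⟨w, rfl⟩ := one_tmul_surj a t
  rw [LinearMap.lTensor_tmul] at ht
  have h3 : ((1 : A ⧸ a) ⊗ₜ[A] (u - d₂ w) : (A ⧸ a) ⊗[A] M₁) = 0 := by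
    rw [TensorProduct.tmul_sub, ht, sub_self]
  have h4 : u - d₂ w ∈ a • (⊤ : Submodule A M₁) := (one_tmul_eq_zero_iff a _).mp h3
  have h5 : d₁ u = d₁ (u - d₂ w) := by
    rw [map_sub, hcomp w, sub_zero]
  rw [h5]
  have : d₁ (u - d₂ w) ∈ Submodule.map d₁ (a • ⊤) := Submodule.mem_map_of_mem h4
  rwa [Submodule.map_smul'', Submodule.map_top] at this

end ModuleLemmas

section Alpha

variable {R Q : Type u} [CommRing R] [AddCommMonoid Q]

theorem logRingHom_single (α : Multiplicative Q →* R) (q : Q) :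
    logRingHom α (AddMonoidAlgebra.single q 1) = α (Multiplicative.ofAdd q) := by
  show ((AddMonoidAlgebra.lift ℤ R Q) α) (AddMonoidAlgebra.single q 1) = _
  rw [AddMonoidAlgebra.lift_single, one_smul]

theorem map_monoidIdealSpan (α : Multiplicative Q →* R) (K : Set Q) :
    Ideal.map (logRingHom α) (monoidIdealSpan K) =
      Ideal.span ((fun q : Q => α (Multiplicative.ofAdd q)) '' K) := by
  rw [monoidIdealSpan, Ideal.map_span, ← Set.image_comp]
  congr 1
  exact Set.image_congr' (fun a => logRingHom_single α a)

theorem mem_span_alpha_iff (α : Multiplicative Q →* R)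
    [Module (AddMonoidAlgebra ℤ Q) R]
    (hsmul : ∀ (g : AddMonoidAlgebra ℤ Q) (y : R), g • y = logRingHom α g * y)
    (K : Set Q) (x : R) :
    x ∈ Ideal.span ((fun q : Q => α (Multiplicative.ofAdd q)) '' K) ↔
      x ∈ monoidIdealSpan K • (⊤ : Submodule (AddMonoidAlgebra ℤ Q) R) := by
  constructor
  · intro hx
    refine Submodule.span_induction ?_ ?_ ?_ ?_ hx
    · rintro _ ⟨q, hq, rfl⟩
      have : (fun q : Q => α (Multiplicative.ofAdd q)) q =
          (AddMonoidAlgebra.single q 1 : AddMonoidAlgebra ℤ Q) • (1 : R) := by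
        rw [hsmul, logRingHom_single, mul_one]
      rw [this]
      exact Submodule.smul_mem_smul (Ideal.subset_span ⟨q, hq, rfl⟩) trivial
    · exact Submodule.zero_mem _
    · intro y z _ _ hy hz; exact Submodule.add_mem _ hy hz
    · intro r y _ hy
      rw [smul_eq_mul]
      refine Submodule.smul_induction_on (p := fun w => r * w ∈
        monoidIdealSpan K • (⊤ : Submodule (AddMonoidAlgebra ℤ Q) R)) hy ?_ ?_
      · intro g hg z _
        rw [hsmul, show r * (logRingHom α g * z) = logRingHom α g * (r * z) by ring, ← hsmul]
        exact Submodule.smul_mem_smul hg trivial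
      · intro y z hy hz; rw [mul_add]; exact Submodule.add_mem _ hy hz
  · intro hx
    refine Submodule.smul_induction_on hx ?_ ?_
    · intro g hg z _
      rw [hsmul]
      refine Ideal.mul_mem_right _ _ ?_
      rw [← map_monoidIdealSpan α K]
      exact Ideal.mem_map_of_mem _ hg
    · intro y z hy hz; exact Ideal.add_mem _ hy hz

end Alpha

set_option maxHeartbeats 1000000 in
set_option synthInstance.maxHeartbeats 400000 in
/-- Let `(R, Q, α)` be a log ring with `R` `α`-flat, and let `I, J` be ideals of the monoid
`Q`. Then `α(I)R ∩ α(J)R = α(I ∩ J)R` as ideals of `R`. -/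
theorem alphaFlat_span_inter {R Q : Type u} [CommRing R] [AddCommMonoid Q]
    (α : Multiplicative Q →* R) (hflat : IsAlphaFlat α)
    (I J : Set Q) (hI : ∀ a : Q, ∀ x ∈ I, a + x ∈ I) (hJ : ∀ a : Q, ∀ x ∈ J, a + x ∈ J) :
    Ideal.span ((fun q : Q => α (Multiplicative.ofAdd q)) '' I) ⊓
        Ideal.span ((fun q : Q => α (Multiplicative.ofAdd q)) '' J) =
      Ideal.span ((fun q : Q => α (Multiplicative.ofAdd q)) '' (I ∩ J)) := by
  classical
  letI : Module (AddMonoidAlgebra ℤ Q) R := (logRingHom α).toModule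
  have hsmul : ∀ (g : AddMonoidAlgebra ℤ Q) (y : R), g • y = logRingHom α g * y :=
    fun _ _ => rfl
  have hIJu : ∀ a : Q, ∀ x ∈ I ∪ J, a + x ∈ I ∪ J := fun a x hx => by
    rcases hx with hx | hx
    · exact Or.inl (hI a x hx)
    · exact Or.inr (hJ a x hx)
  let Y : ModuleCat (AddMonoidAlgebra ℤ Q) := ModuleCat.of _ R
  obtain ⟨P⟩ := HasProjectiveResolution.out (Z := Y)
  haveI : Module.Projective (AddMonoidAlgebra ℤ Q) ↥(P.complex.X 0) :=
    (IsProjective.iff_projective _).mpr (P.projective 0)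
  -- the key consequence of α-flatness
  have key : ∀ (K : Set Q), (∀ a : Q, ∀ x ∈ K, a + x ∈ K) →
      ∀ y : ↥(P.complex.X 0), y ∈ LinearMap.range (P.complex.d 1 0).hom →
        y ∈ monoidIdealSpan K • (⊤ : Submodule (AddMonoidAlgebra ℤ Q) ↥(P.complex.X 0)) →
        y ∈ monoidIdealSpan K • LinearMap.range (P.complex.d 1 0).hom := by
    intro K hK
    let F : ModuleCat (AddMonoidAlgebra ℤ Q) ⥤ ModuleCat (AddMonoidAlgebra ℤ Q) :=
      (tensoringLeft (ModuleCat (AddMonoidAlgebra ℤ Q))).obj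
        (ModuleCat.of _ (AddMonoidAlgebra ℤ Q ⧸ monoidIdealSpan K))
    have h1 : Limits.IsZero ((F.leftDerived 1).obj Y) := hflat K hK
    have h2 : Limits.IsZero
        ((HomologicalComplex.homologyFunctor _ _ 1).obj
          ((F.mapHomologicalComplex _).obj P.complex)) :=
      Limits.IsZero.of_iso h1 (P.isoLeftDerivedObj F 1).symm
    have h3 : (((F.mapHomologicalComplex (ComplexShape.down ℕ)).obj P.complex)).ExactAt 1 := by
      rw [HomologicalComplex.exactAt_iff_isZero_homology]
      exact h2
    rw [HomologicalComplex.exactAt_iff' _ 2 1 0 (by simp) (by simp)] at h3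
    rw [ShortComplex.moduleCat_exact_iff] at h3
    have hex : ∀ t : (AddMonoidAlgebra ℤ Q ⧸ monoidIdealSpan K)
          ⊗[AddMonoidAlgebra ℤ Q] ↥(P.complex.X 1),
        (LinearMap.lTensor _ (P.complex.d 1 0).hom) t = 0 →
        ∃ t' : (AddMonoidAlgebra ℤ Q ⧸ monoidIdealSpan K)
          ⊗[AddMonoidAlgebra ℤ Q] ↥(P.complex.X 2),
        (LinearMap.lTensor _ (P.complex.d 2 1).hom) t' = t := h3
    have hcomp : ∀ x, (P.complex.d 1 0) ((P.complex.d 2 1) x) = 0 := by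
      intro x
      have h := P.complex.d_comp_d 2 1 0
      exact congrArg (fun f => f.hom x) h
    exact core_exact_lemma (P.complex.d 2 1).hom (P.complex.d 1 0).hom hcomp hex
  -- the projection to R
  let π : ↥(P.complex.X 0) →ₗ[AddMonoidAlgebra ℤ Q] R := (P.π.f 0).hom
  have hπsurj : Function.Surjective π :=
    (ModuleCat.epi_iff_surjective (P.π.f 0)).mp inferInstance
  have hπexact : ∀ y, π y = 0 → y ∈ LinearMap.range (P.complex.d 1 0).hom := by
    have h := P.exact₀
    rw [ShortComplex.moduleCat_exact_iff] at h
    intro y hy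
    obtain ⟨x, hx⟩ := h y hy
    exact ⟨x, hx⟩
  have hπd : ∀ x, π ((P.complex.d 1 0) x) = 0 := by
    intro x
    have h := P.complex_d_comp_π_f_zero
    exact congrArg (fun f => f.hom x) h
  have hmap : ∀ (K : Set Q), Submodule.map π (monoidIdealSpan K • ⊤) =
      monoidIdealSpan K • (⊤ : Submodule (AddMonoidAlgebra ℤ Q) R) := by
    intro K
    rw [Submodule.map_smul'', Submodule.map_top, LinearMap.range_eq_top.mpr hπsurj]
  ext x
  rw [Submodule.mem_inf, mem_span_alpha_iff α hsmul I x, mem_span_alpha_iff α hsmul J x,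
    mem_span_alpha_iff α hsmul (I ∩ J) x]
  constructor
  · rintro ⟨hxI, hxJ⟩
    rw [← hmap I] at hxI
    rw [← hmap J] at hxJ
    obtain ⟨u, huI, hu⟩ := hxI
    obtain ⟨v, hvJ, hv⟩ := hxJ
    have huv : u - v ∈ LinearMap.range (P.complex.d 1 0).hom := by
      apply hπexact
      rw [map_sub, hu, hv, sub_self]
    have huv2 : u - v ∈ monoidIdealSpan (I ∪ J) •
        (⊤ : Submodule (AddMonoidAlgebra ℤ Q) ↥(P.complex.X 0)) := by
      rw [monoidIdealSpan_union hI hJ, Submodule.sup_smul]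
      exact Submodule.sub_mem _ (Submodule.mem_sup_left huI) (Submodule.mem_sup_right hvJ)
    have huv3 := key (I ∪ J) hIJu (u - v) huv huv2
    rw [monoidIdealSpan_union hI hJ, Submodule.sup_smul] at huv3
    obtain ⟨p, hp, q, hq, hpq⟩ := Submodule.mem_sup.mp huv3
    have hu' : u = v + (p + q) := by rw [hpq]; abel
    have hupvq : u - p = v + q := by rw [hu']; abel
    have hwI : u - p ∈ monoidIdealSpan I •
        (⊤ : Submodule (AddMonoidAlgebra ℤ Q) ↥(P.complex.X 0)) :=
      Submodule.sub_mem _ huI (Submodule.smul_mono le_rfl le_top hp)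
    have hwJ : u - p ∈ monoidIdealSpan J •
        (⊤ : Submodule (AddMonoidAlgebra ℤ Q) ↥(P.complex.X 0)) := by
      rw [hupvq]
      exact Submodule.add_mem _ hvJ (Submodule.smul_mono le_rfl le_top hq)
    have hw : u - p ∈ monoidIdealSpan (I ∩ J) •
        (⊤ : Submodule (AddMonoidAlgebra ℤ Q) ↥(P.complex.X 0)) := by
      rw [monoidIdealSpan_inter hI hJ, ← projective_smul_top_inf]
      exact Submodule.mem_inf.mpr ⟨hwI, hwJ⟩
    rw [← hmap (I ∩ J)]
    refine ⟨u - p, hw, ?_⟩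
    have hπp : π p = 0 := by
      have hpN : p ∈ LinearMap.range (P.complex.d 1 0).hom :=
        Submodule.smul_le_right hp
      obtain ⟨z, hz⟩ := hpN
      rw [← hz]
      exact hπd z
    rw [map_sub, hπp, sub_zero, hu]
  · intro hx
    rw [monoidIdealSpan_inter hI hJ] at hx
    exact ⟨Submodule.smul_mono_left inf_le_left hx,
      Submodule.smul_mono_left inf_le_right hx⟩
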